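/- For α ∈ [0, 2), the state |Φ^α⟩ = cos θ_α |00⟩ + sin θ_α |11⟩ with θ_α = (1/2) arcsin(√((4−α²)/(4+α²))) satisfies sin 2θ_α = √((4−α²)/(4+α²)) and cos 2θ_α = √(2α²/(4+α²)), and is the eigenstate of the tilted CHSH operator W_α(π/4, b*_α) (with b*_α = arcsin(√((4−α²)/8))) achieving eigenvalue √(8 + 2α²). -/

import Mathlib

open Matrix ComplexOrder Kronecker Real

/-- Pauli X. -/
def σx : Matrix (Fin 2) (Fin 2) ℂ := !![0, 1; 1, 0]
/-- Pauli Y. -/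
def σy : Matrix (Fin 2) (Fin 2) ℂ := !![0, -Complex.I; Complex.I, 0]
/-- Pauli Z. -/
def σz : Matrix (Fin 2) (Fin 2) ℂ := !![1, 0; 0, -1]

/-- The tilted CHSH operator `W_α(a,b)` with qubit observables
`A_r = cos a·X + (−1)^r sin a·Z`, `B_r = cos b·X + (−1)^r sin b·Z`. -/
noncomputable def Wop (α a b : ℝ) : Matrix (Fin 2 × Fin 2) (Fin 2 × Fin 2) ℂ :=
  let A0 := ((Real.cos a : ℝ) : ℂ) • σx + ((Real.sin a : ℝ) : ℂ) • σz
  let A1 := ((Real.cos a : ℝ) : ℂ) • σx - ((Real.sin a : ℝ) : ℂ) • σz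
  let B0 := ((Real.cos b : ℝ) : ℂ) • σx + ((Real.sin b : ℝ) : ℂ) • σz
  let B1 := ((Real.cos b : ℝ) : ℂ) • σx - ((Real.sin b : ℝ) : ℂ) • σz
  ((α : ℝ) : ℂ) • (A0 ⊗ₖ (1 : Matrix (Fin 2) (Fin 2) ℂ)) + A0 ⊗ₖ (B0 + B1) + A1 ⊗ₖ (B0 - B1)

set_option maxHeartbeats 1600000 in
/-- For `α ∈ [0,2)`, the partially entangled state
`|Φ^α⟩ = cos θ_α |00⟩ + sin θ_α |11⟩` with
`θ_α = (1/2) arcsin √((4−α²)/(4+α²))` satisfies the stated trigonometric identities, and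
(up to a fixed local basis change given by local unitaries `U_A, U_B`) is an eigenstate of
`W_α(π/4, b*_α)` with eigenvalue `√(8+2α²)`; in particular it achieves
`⟨Φ^α| W_α |Φ^α⟩ = √(8+2α²)`. -/
theorem tilted_chsh_optimal_state (α : ℝ) (hα : α ∈ Set.Ico (0 : ℝ) 2)
    (θ : ℝ) (hθ : θ = (1/2) * Real.arcsin (Real.sqrt ((4 - α ^ 2) / (4 + α ^ 2))))
    (φ : Fin 2 × Fin 2 → ℂ)
    (hφ : φ = fun p => if p = (0, 0) then ((Real.cos θ : ℝ) : ℂ)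
      else if p = (1, 1) then ((Real.sin θ : ℝ) : ℂ) else 0) :
    Real.sin (2 * θ) = Real.sqrt ((4 - α ^ 2) / (4 + α ^ 2)) ∧
    Real.cos (2 * θ) = Real.sqrt (2 * α ^ 2 / (4 + α ^ 2)) ∧
    ((Real.sqrt (8 + 2 * α ^ 2) : ℝ) : ℂ) ∈
      spectrum ℂ (Wop α (π/4) (Real.arcsin (Real.sqrt ((4 - α ^ 2) / 8)))) ∧
    ∃ UA UB : Matrix (Fin 2) (Fin 2) ℂ, UAᴴ * UA = 1 ∧ UBᴴ * UB = 1 ∧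
      (Wop α (π/4) (Real.arcsin (Real.sqrt ((4 - α ^ 2) / 8)))).mulVec
          ((UA ⊗ₖ UB).mulVec φ)
        = ((Real.sqrt (8 + 2 * α ^ 2) : ℝ) : ℂ) • (UA ⊗ₖ UB).mulVec φ ∧
      star ((UA ⊗ₖ UB).mulVec φ) ⬝ᵥ
          (Wop α (π/4) (Real.arcsin (Real.sqrt ((4 - α ^ 2) / 8)))).mulVec
            ((UA ⊗ₖ UB).mulVec φ)
        = ((Real.sqrt (8 + 2 * α ^ 2) : ℝ) : ℂ) := by
  obtain ⟨hα0, hα2'⟩ := hα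
  have h4p : (0:ℝ) < 4 + α^2 := by positivity
  have h4m : (0:ℝ) ≤ 4 - α^2 := by nlinarith
  set b := Real.arcsin (Real.sqrt ((4 - α ^ 2) / 8)) with hb
  have hsb : Real.sin b = Real.sqrt ((4-α^2)/8) :=
    Real.sin_arcsin (by linarith [Real.sqrt_nonneg ((4-α^2)/8)]) (Real.sqrt_le_one.2 (by nlinarith))
  have hcb : Real.cos b = Real.sqrt ((4+α^2)/8) := by
    rw [hb, Real.cos_arcsin, Real.sq_sqrt (by positivity : (0:ℝ) ≤ (4-α^2)/8)]
    congr 1; ring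
  have h2θ : 2*θ = Real.arcsin (Real.sqrt ((4-α^2)/(4+α^2))) := by rw [hθ]; ring
  have hsin2 : Real.sin (2*θ) = Real.sqrt ((4-α^2)/(4+α^2)) := by
    rw [h2θ]
    exact Real.sin_arcsin (by linarith [Real.sqrt_nonneg ((4-α^2)/(4+α^2))])
      (Real.sqrt_le_one.2 (by rw [div_le_one h4p]; nlinarith))
  have hcos2 : Real.cos (2*θ) = Real.sqrt (2*α^2/(4+α^2)) := by
    rw [h2θ, Real.cos_arcsin, Real.sq_sqrt (by positivity)]
    congr 1; field_simp; ring
  have key3 : Real.sqrt (8+2*α^2) = 4 * Real.cos b := by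
    rw [hcb, show (8:ℝ)+2*α^2 = 4^2*((4+α^2)/8) by ring,
      Real.sqrt_mul (by norm_num), Real.sqrt_sq (by norm_num : (0:ℝ) ≤ 4)]
  have key1 : α = 2 * Real.cos b * Real.cos (2*θ) := by
    rw [hcb, hcos2, mul_assoc, ← Real.sqrt_mul (by positivity),
      show (4+α^2)/8*(2*α^2/(4+α^2)) = (α/2)^2 by field_simp; ring,
      Real.sqrt_sq (by linarith)]
    ring
  have key2 : Real.sin b = Real.cos b * Real.sin (2*θ) := by
    rw [hsb, hcb, hsin2, ← Real.sqrt_mul (by positivity)]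
    congr 1; field_simp
  have hc2 : Real.cos (2*θ) = 1 - 2*Real.sin θ^2 := by
    rw [Real.cos_two_mul]; linarith [Real.sin_sq_add_cos_sq θ]
  have hs2 : Real.sin (2*θ) = 2*Real.sin θ*Real.cos θ := Real.sin_two_mul θ
  -- the rotation matrices
  set p := Real.cos (π/8) with hp
  set q := Real.sin (π/8) with hq
  have rid1 : Real.sqrt 2/2 * (p + q) = p := by
    have h := Real.cos_sub (π/4) (π/8)
    rw [show π/4 - π/8 = π/8 by ring, Real.cos_pi_div_four, Real.sin_pi_div_four] at h
    rw [hp, hq]; linarith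
  have rid2 : Real.sqrt 2/2 * (p - q) = q := by
    have h := Real.sin_sub (π/4) (π/8)
    rw [show π/4 - π/8 = π/8 by ring, Real.cos_pi_div_four, Real.sin_pi_div_four] at h
    rw [hp, hq]; linarith
  have hpq : p^2 + q^2 = 1 := by rw [hp, hq, add_comm]; exact Real.sin_sq_add_cos_sq _
  have hr2 : Real.sqrt 2 * Real.sqrt 2 = 2 := Real.mul_self_sqrt (by norm_num)
  set UA : Matrix (Fin 2) (Fin 2) ℂ := !![(p:ℂ), -(q:ℂ); (q:ℂ), (p:ℂ)] with hUA
  set UB : Matrix (Fin 2) (Fin 2) ℂ :=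
    !![((Real.sqrt 2/2:ℝ):ℂ), ((Real.sqrt 2/2:ℝ):ℂ);
       ((Real.sqrt 2/2:ℝ):ℂ), -((Real.sqrt 2/2:ℝ):ℂ)] with hUB
  have hUAu : UAᴴ * UA = 1 := by
    ext i j
    fin_cases i <;> fin_cases j <;>
      simp [hUA, Matrix.mul_apply, Fin.sum_univ_two, Matrix.one_apply] <;>
      norm_cast <;> nlinarith [hpq]
  have hUBu : UBᴴ * UB = 1 := by
    ext i j
    fin_cases i <;> fin_cases j <;>
      simp [hUB, Matrix.mul_apply, Fin.sum_univ_two, Matrix.one_apply, Complex.star_def,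
        map_ofNat, ← Complex.ofReal_ofNat] <;>
      norm_cast <;> linear_combination hr2/2
  have hA0 : (((Real.cos (π/4):ℝ):ℂ) • σx + ((Real.sin (π/4):ℝ):ℂ) • σz) * UA = UA * σz := by
    rw [Real.cos_pi_div_four, Real.sin_pi_div_four]
    ext i j
    fin_cases i <;> fin_cases j <;>
      simp [hUA, σx, σz, Matrix.mul_apply, Fin.sum_univ_two] <;>
      norm_cast <;> simp only [← Complex.ofReal_ofNat, ← Complex.ofReal_mul, ← Complex.ofReal_add, ← Complex.ofReal_sub, ← Complex.ofReal_neg, ← Complex.ofReal_div, ← Complex.ofReal_pow, Complex.ofReal_inj] <;> (try rw [← hp]) <;> (try rw [← hq]) <;> linarith [rid1, rid2]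
  have hA1 : (((Real.cos (π/4):ℝ):ℂ) • σx - ((Real.sin (π/4):ℝ):ℂ) • σz) * UA = UA * σx := by
    rw [Real.cos_pi_div_four, Real.sin_pi_div_four]
    ext i j
    fin_cases i <;> fin_cases j <;>
      simp [hUA, σx, σz, Matrix.mul_apply, Fin.sum_univ_two] <;>
      norm_cast <;> simp only [← Complex.ofReal_ofNat, ← Complex.ofReal_mul, ← Complex.ofReal_add, ← Complex.ofReal_sub, ← Complex.ofReal_neg, ← Complex.ofReal_div, ← Complex.ofReal_pow, Complex.ofReal_inj] <;> (try rw [← hp]) <;> (try rw [← hq]) <;> linarith [rid1, rid2]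
  have hBx : σx * UB = UB * σz := by
    ext i j
    fin_cases i <;> fin_cases j <;>
      simp [hUB, σx, σz, Matrix.mul_apply, Fin.sum_univ_two]
  have hBz : σz * UB = UB * σx := by
    ext i j
    fin_cases i <;> fin_cases j <;>
      simp [hUB, σx, σz, Matrix.mul_apply, Fin.sum_univ_two]
  -- the conjugated operator
  set Wp : Matrix (Fin 2 × Fin 2) (Fin 2 × Fin 2) ℂ :=
    ((α:ℝ):ℂ) • (σz ⊗ₖ (1 : Matrix (Fin 2) (Fin 2) ℂ))
      + ((2*Real.cos b:ℝ):ℂ) • (σz ⊗ₖ σz)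
      + ((2*Real.sin b:ℝ):ℂ) • (σx ⊗ₖ σx) with hWp
  have hconj : Wop α (π/4) b * (UA ⊗ₖ UB) = (UA ⊗ₖ UB) * Wp := by
    have hBsum : ((((Real.cos b:ℝ):ℂ) • σx + ((Real.sin b:ℝ):ℂ) • σz)
        + (((Real.cos b:ℝ):ℂ) • σx - ((Real.sin b:ℝ):ℂ) • σz))
        = ((2*Real.cos b:ℝ):ℂ) • σx := by push_cast; module
    have hBdiff : ((((Real.cos b:ℝ):ℂ) • σx + ((Real.sin b:ℝ):ℂ) • σz)
        - (((Real.cos b:ℝ):ℂ) • σx - ((Real.sin b:ℝ):ℂ) • σz))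
        = ((2*Real.sin b:ℝ):ℂ) • σz := by push_cast; module
    have hBs : (((2*Real.cos b:ℝ):ℂ) • σx) * UB = UB * (((2*Real.cos b:ℝ):ℂ) • σz) := by
      rw [Matrix.smul_mul, hBx, Matrix.mul_smul]
    have hBd : (((2*Real.sin b:ℝ):ℂ) • σz) * UB = UB * (((2*Real.sin b:ℝ):ℂ) • σx) := by
      rw [Matrix.smul_mul, hBz, Matrix.mul_smul]
    have h1B : (1 : Matrix (Fin 2) (Fin 2) ℂ) * UB = UB * 1 := by rw [one_mul, mul_one]
    have hWdef : Wop α (π/4) b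
        = ((α:ℝ):ℂ) • ((((Real.cos (π/4):ℝ):ℂ) • σx + ((Real.sin (π/4):ℝ):ℂ) • σz)
            ⊗ₖ (1 : Matrix (Fin 2) (Fin 2) ℂ))
          + (((Real.cos (π/4):ℝ):ℂ) • σx + ((Real.sin (π/4):ℝ):ℂ) • σz)
            ⊗ₖ ((((Real.cos b:ℝ):ℂ) • σx + ((Real.sin b:ℝ):ℂ) • σz)
              + (((Real.cos b:ℝ):ℂ) • σx - ((Real.sin b:ℝ):ℂ) • σz))
          + (((Real.cos (π/4):ℝ):ℂ) • σx - ((Real.sin (π/4):ℝ):ℂ) • σz)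
            ⊗ₖ ((((Real.cos b:ℝ):ℂ) • σx + ((Real.sin b:ℝ):ℂ) • σz)
              - (((Real.cos b:ℝ):ℂ) • σx - ((Real.sin b:ℝ):ℂ) • σz)) := rfl
    rw [hWdef, hBsum, hBdiff, Matrix.add_mul, Matrix.add_mul, Matrix.smul_mul,
      ← Matrix.mul_kronecker_mul, ← Matrix.mul_kronecker_mul, ← Matrix.mul_kronecker_mul,
      hA0, hA1, hBs, hBd, h1B, Matrix.mul_kronecker_mul, Matrix.mul_kronecker_mul,
      Matrix.mul_kronecker_mul, hWp]
    simp only [Matrix.kronecker_smul, Matrix.mul_add, Matrix.mul_smul, Matrix.smul_mul]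
  -- the eigen-equation for the conjugated operator
  have hWpφ : Wp.mulVec φ = ((Real.sqrt (8 + 2 * α ^ 2) : ℝ) : ℂ) • φ := by
    funext x
    obtain ⟨i, j⟩ := x
    fin_cases i <;> fin_cases j <;>
      simp [hWp, hφ, Matrix.mulVec, dotProduct, Fintype.sum_prod_type, Fin.sum_univ_two,
        Matrix.kroneckerMap_apply, σx, σz, Matrix.one_apply, Prod.ext_iff]
    · norm_cast
      simp only [← Complex.ofReal_ofNat, ← Complex.ofReal_mul, ← Complex.ofReal_add, ← Complex.ofReal_sub, ← Complex.ofReal_neg, ← Complex.ofReal_div, ← Complex.ofReal_pow, Complex.ofReal_inj]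
      linear_combination Real.cos θ * key1 - Real.cos θ * key3 + 2*Real.sin θ * key2
        + 2*Real.cos θ*Real.cos b*hc2 + 2*Real.sin θ*Real.cos b*hs2
    · norm_cast
      simp only [← Complex.ofReal_ofNat, ← Complex.ofReal_mul, ← Complex.ofReal_add, ← Complex.ofReal_sub, ← Complex.ofReal_neg, ← Complex.ofReal_div, ← Complex.ofReal_pow, Complex.ofReal_inj]
      linear_combination (-Real.sin θ) * key1 - Real.sin θ * key3 + 2*Real.cos θ * key2
        - 2*Real.sin θ*Real.cos b*hc2 + 2*Real.cos θ*Real.cos b*hs2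
        + 4*Real.cos b*Real.sin θ*(Real.sin_sq_add_cos_sq θ)
  have heig : (Wop α (π/4) b).mulVec ((UA ⊗ₖ UB).mulVec φ)
      = ((Real.sqrt (8 + 2 * α ^ 2) : ℝ) : ℂ) • (UA ⊗ₖ UB).mulVec φ := by
    rw [Matrix.mulVec_mulVec, hconj, ← Matrix.mulVec_mulVec, hWpφ, Matrix.mulVec_smul]
  -- auxiliary: inverse of the local unitary
  have hinv : (UAᴴ ⊗ₖ UBᴴ) * (UA ⊗ₖ UB) = 1 := by
    rw [← Matrix.mul_kronecker_mul, hUAu, hUBu, Matrix.one_kronecker_one]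
  have hcθ : Real.cos θ ≠ 0 := by
    have ha1 := Real.neg_pi_div_two_le_arcsin (Real.sqrt ((4 - α ^ 2) / (4 + α ^ 2)))
    have ha2 := Real.arcsin_le_pi_div_two (Real.sqrt ((4 - α ^ 2) / (4 + α ^ 2)))
    have := Real.pi_pos
    exact ne_of_gt (Real.cos_pos_of_mem_Ioo ⟨by rw [hθ]; linarith, by rw [hθ]; linarith⟩)
  have hψ0 : (UA ⊗ₖ UB).mulVec φ ≠ 0 := by
    intro h
    have hφ0 : φ = 0 := by
      have h2 := congrArg (fun v => (UAᴴ ⊗ₖ UBᴴ).mulVec v) h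
      simpa [Matrix.mulVec_mulVec, hinv, Matrix.one_mulVec, Matrix.mulVec_zero] using h2
    have h00 := congrFun hφ0 (0, 0)
    rw [hφ] at h00
    simp at h00
    exact hcθ (by exact_mod_cast h00)
  refine ⟨hsin2, hcos2, ?_, UA, UB, hUAu, hUBu, heig, ?_⟩
  · rw [spectrum.mem_iff]
    intro hunit
    obtain ⟨u, hu⟩ := hunit
    have hz : ((algebraMap ℂ (Matrix (Fin 2 × Fin 2) (Fin 2 × Fin 2) ℂ))
        ((Real.sqrt (8 + 2 * α ^ 2) : ℝ) : ℂ) - Wop α (π/4) b).mulVec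
          ((UA ⊗ₖ UB).mulVec φ) = 0 := by
      rw [Matrix.sub_mulVec, heig, Algebra.algebraMap_eq_smul_one,
        Matrix.smul_mulVec, Matrix.one_mulVec, sub_self]
    apply hψ0
    calc (UA ⊗ₖ UB).mulVec φ
        = (1 : Matrix (Fin 2 × Fin 2) (Fin 2 × Fin 2) ℂ).mulVec ((UA ⊗ₖ UB).mulVec φ) := by
          rw [Matrix.one_mulVec]
      _ = ((↑u⁻¹ * ↑u : Matrix (Fin 2 × Fin 2) (Fin 2 × Fin 2) ℂ)).mulVec
            ((UA ⊗ₖ UB).mulVec φ) := by rw [u.inv_mul]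
      _ = (↑u⁻¹ : Matrix (Fin 2 × Fin 2) (Fin 2 × Fin 2) ℂ).mulVec
            ((↑u : Matrix (Fin 2 × Fin 2) (Fin 2 × Fin 2) ℂ).mulVec ((UA ⊗ₖ UB).mulVec φ)) := by
          rw [← Matrix.mulVec_mulVec]
      _ = 0 := by rw [hu, hz, Matrix.mulVec_zero]
  · have hUH : (UA ⊗ₖ UB)ᴴ = UAᴴ ⊗ₖ UBᴴ := by
      ext x y
      obtain ⟨i, j⟩ := x; obtain ⟨k, l⟩ := y
      simp [Matrix.conjTranspose_apply, Matrix.kroneckerMap_apply, star_mul', mul_comm]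
    have hnorm : star ((UA ⊗ₖ UB).mulVec φ) ⬝ᵥ ((UA ⊗ₖ UB).mulVec φ) = 1 := by
      rw [Matrix.star_mulVec, Matrix.dotProduct_mulVec, Matrix.vecMul_vecMul, hUH, hinv,
        Matrix.vecMul_one]
      rw [hφ]
      simp [dotProduct, Fintype.sum_prod_type, Fin.sum_univ_two, Complex.star_def,
        Complex.conj_ofReal]
      norm_cast
      simp only [Complex.conj_ofReal]
      norm_cast
      nlinarith [Real.sin_sq_add_cos_sq θ]
    rw [heig, dotProduct_smul, hnorm]
    simp
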